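/- Let f : [a,b] → ℝ be differentiable on an open interval containing [a,b] with a < b, and suppose |f'(x)| ≤ M for all x ∈ [a,b], with |f'| convex on [a,b]. Then |f((a+b)/2) - (1/(b-a)) ∫_a^b f(u) du| ≤ M(b-a)/4. -/

import Mathlib

open MeasureTheory intervalIntegral Set

theorem midpoint_bounded_deriv
    (a b c d M : ℝ) (f f' : ℝ → ℝ) (hab : a < b)
    (hsub : Icc a b ⊆ Ioo c d)
    (hf : ∀ x ∈ Ioo c d, HasDerivAt f (f' x) x)
    (hM : ∀ x ∈ Icc a b, |f' x| ≤ M)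
    (hconv : ∀ x ∈ Icc a b, ∀ y ∈ Icc a b, ∀ t ∈ Icc (0:ℝ) 1,
      |f' (t * x + (1 - t) * y)| ≤ t * |f' x| + (1 - t) * |f' y|) :
    |f ((a + b) / 2) - (1 / (b - a)) * ∫ u in a..b, f u| ≤
      M * (b - a) / 4 := by
  have hab' : a ≤ b := hab.le
  set m : ℝ := (a + b) / 2 with hmdef
  have ham : a ≤ m := by rw [hmdef]; linarith
  have hmb : m ≤ b := by rw [hmdef]; linarith
  have hm : m ∈ Icc a b := ⟨ham, hmb⟩
  have hM0 : 0 ≤ M := le_trans (abs_nonneg _) (hM a ⟨le_refl a, hab'⟩)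
  have hderiv : ∀ x ∈ Icc a b, HasDerivWithinAt f (f' x) (Icc a b) x :=
    fun x hx => (hf x (hsub hx)).hasDerivWithinAt
  have hlip : ∀ u ∈ Icc a b, |f m - f u| ≤ M * |m - u| := by
    intro u hu
    have := (convex_Icc a b).norm_image_sub_le_of_norm_hasDerivWithin_le hderiv
      (fun x hx => by simpa [Real.norm_eq_abs] using hM x hx) hu hm
    simpa [Real.norm_eq_abs] using this
  have hcont : ContinuousOn f (Icc a b) := fun x hx =>
    (hderiv x hx).continuousWithinAt
  have hint : IntervalIntegrable f volume a b :=
    (hcont.mono (by rw [uIcc_of_le hab'])).intervalIntegrable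
  have hint1 : IntervalIntegrable f volume a m :=
    hint.mono_set (by rw [uIcc_of_le ham, uIcc_of_le hab']; exact Icc_subset_Icc le_rfl hmb)
  have hint2 : IntervalIntegrable f volume m b :=
    hint.mono_set (by rw [uIcc_of_le hmb, uIcc_of_le hab']; exact Icc_subset_Icc ham le_rfl)
  -- bound on [a, m]
  have h1 : |∫ u in a..m, (f m - f u)| ≤ M * ((m - a) ^ 2 / 2) := by
    have hb : ∀ᵐ u ∂volume.restrict (uIoc a m), ‖f m - f u‖ ≤ M * (m - u) := by
      rw [uIoc_of_le ham, ae_restrict_iff' measurableSet_Ioc]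
      refine .of_forall fun u hu => ?_
      have hu' : u ∈ Icc a b := ⟨hu.1.le, hu.2.trans hmb⟩
      calc ‖f m - f u‖ ≤ M * |m - u| := hlip u hu'
        _ = M * (m - u) := by rw [abs_of_nonneg (by linarith [hu.2])]
    have hbi : IntervalIntegrable (fun u => M * (m - u)) volume a m :=
      (Continuous.intervalIntegrable (by continuity) _ _)
    calc |∫ u in a..m, (f m - f u)|
        ≤ |∫ u in a..m, M * (m - u)| :=
          intervalIntegral.norm_integral_le_abs_of_norm_le hb hbi
      _ = M * ((m - a) ^ 2 / 2) := by
          rw [intervalIntegral.integral_const_mul, intervalIntegral.integral_sub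
            intervalIntegrable_const intervalIntegrable_id,
            integral_id, intervalIntegral.integral_const, smul_eq_mul, hmdef]
          rw [abs_of_nonneg (by nlinarith [mul_nonneg hM0 (sq_nonneg (b - a))])]
          ring
  -- bound on [m, b]
  have h2 : |∫ u in m..b, (f m - f u)| ≤ M * ((b - m) ^ 2 / 2) := by
    have hb : ∀ᵐ u ∂volume.restrict (uIoc m b), ‖f m - f u‖ ≤ M * (u - m) := by
      rw [uIoc_of_le hmb, ae_restrict_iff' measurableSet_Ioc]
      refine .of_forall fun u hu => ?_
      have hu' : u ∈ Icc a b := ⟨ham.trans hu.1.le, hu.2⟩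
      calc ‖f m - f u‖ ≤ M * |m - u| := hlip u hu'
        _ = M * (u - m) := by rw [abs_of_nonpos (by linarith [hu.1.le]), neg_sub]
    have hbi : IntervalIntegrable (fun u => M * (u - m)) volume m b :=
      (Continuous.intervalIntegrable (by continuity) _ _)
    calc |∫ u in m..b, (f m - f u)|
        ≤ |∫ u in m..b, M * (u - m)| :=
          intervalIntegral.norm_integral_le_abs_of_norm_le hb hbi
      _ = M * ((b - m) ^ 2 / 2) := by
          rw [intervalIntegral.integral_const_mul, intervalIntegral.integral_sub
            intervalIntegrable_id intervalIntegrable_const,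
            integral_id, intervalIntegral.integral_const, smul_eq_mul, hmdef]
          rw [abs_of_nonneg (by nlinarith [mul_nonneg hM0 (sq_nonneg (b - a))])]
          ring
  have hsplit : (∫ u in a..b, (f m - f u)) =
      (∫ u in a..m, (f m - f u)) + (∫ u in m..b, (f m - f u)) :=
    (intervalIntegral.integral_add_adjacent_intervals
      (intervalIntegrable_const.sub hint1) (intervalIntegrable_const.sub hint2)).symm
  have hkey : |∫ u in a..b, (f m - f u)| ≤ M * (b - a) ^ 2 / 4 := by
    rw [hsplit]
    calc |(∫ u in a..m, (f m - f u)) + (∫ u in m..b, (f m - f u))|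
        ≤ |∫ u in a..m, (f m - f u)| + |∫ u in m..b, (f m - f u)| := abs_add_le _ _
      _ ≤ M * ((m - a) ^ 2 / 2) + M * ((b - m) ^ 2 / 2) := add_le_add h1 h2
      _ = M * (b - a) ^ 2 / 4 := by rw [hmdef]; ring
  have hrw : f m - (1 / (b - a)) * ∫ u in a..b, f u =
      (1 / (b - a)) * ∫ u in a..b, (f m - f u) := by
    rw [intervalIntegral.integral_sub intervalIntegrable_const hint,
      intervalIntegral.integral_const]
    have hba : b - a ≠ 0 := by linarith
    field_simp
    ring
  rw [hrw, abs_mul, abs_of_nonneg (le_of_lt (one_div_pos.mpr (by linarith : (0:ℝ) < b - a)))]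
  calc (1 / (b - a)) * |∫ u in a..b, (f m - f u)|
      ≤ (1 / (b - a)) * (M * (b - a) ^ 2 / 4) := by
        exact mul_le_mul_of_nonneg_left hkey (le_of_lt (one_div_pos.mpr (by linarith : (0:ℝ) < b - a)))
    _ = M * (b - a) / 4 := by
        have hba : b - a ≠ 0 := by linarith
        field_simp
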